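/- For every n ≥ 1 and every 1 ≤ i ≤ n, the following identity holds in the integral group algebra ℤ[𝔖_{n+1}]: sh_{n+1} − ∑_{B ⊆ {1,…,n}} D_i(σ_B) = ∑_{A} σ_A, where the right-hand sum ranges over those subsets A ⊆ {1,…,n+1} containing exactly one of the two elements i and i+1. -/

import Mathlib

/-- The shuffle permutation `σ_A` associated to a subset `A ⊆ {1,…,n}`:
positions `1,…,|A|` are sent, in order, to the elements of `A` listed increasingly,
and positions `|A|+1,…,n` are sent, in order, to the elements of the complement of `A`
listed increasingly.  (Here everything is 0-indexed, using `Fin n`.) -/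
def shufflePerm {n : ℕ} (A : Finset (Fin n)) : Equiv.Perm (Fin n) :=
  (finCongr (show n = A.card + Aᶜ.card from by
      have h1 : A.card ≤ n := by simpa using Finset.card_le_univ A
      have h2 : Aᶜ.card = n - A.card := by simp [Finset.card_compl]
      omega)).trans <|
  finSumFinEquiv.symm.trans <|
  (Equiv.sumCongr (A.orderIsoOfFin rfl).toEquiv
      ((Aᶜ.orderIsoOfFin rfl).toEquiv.trans
        (Equiv.subtypeEquivRight fun _ => Finset.mem_compl))).trans <|
  Equiv.sumCompl (· ∈ A)

lemma shufflePerm_apply_lt {n : ℕ} (A : Finset (Fin n)) (k : Fin n) (h : (k : ℕ) < A.card) :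
    shufflePerm A k = A.orderEmbOfFin rfl ⟨k, h⟩ := by
  have hc : n = A.card + Aᶜ.card := by
    have h1 : A.card ≤ n := by simpa using Finset.card_le_univ A
    have h2 : Aᶜ.card = n - A.card := by simp [Finset.card_compl]
    omega
  have hs : finSumFinEquiv.symm (finCongr hc k) = Sum.inl ⟨k, h⟩ := by
    rw [Equiv.symm_apply_eq]
    ext
    simp [finSumFinEquiv]
  simp only [shufflePerm, Equiv.trans_apply, hs, Equiv.sumCongr_apply, Sum.map_inl,
    Equiv.sumCompl_apply_inl]
  rfl

lemma shufflePerm_apply_ge {n : ℕ} (A : Finset (Fin n)) (k : Fin n) (h : A.card ≤ (k : ℕ)) :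
    shufflePerm A k = Aᶜ.orderEmbOfFin rfl ⟨(k : ℕ) - A.card, by
      have : Aᶜ.card = n - A.card := by simp [Finset.card_compl]
      omega⟩ := by
  have hc : n = A.card + Aᶜ.card := by
    have h1 : A.card ≤ n := by simpa using Finset.card_le_univ A
    have h2 : Aᶜ.card = n - A.card := by simp [Finset.card_compl]
    omega
  have hs : finSumFinEquiv.symm (finCongr hc k) = Sum.inr ⟨(k : ℕ) - A.card, by omega⟩ := by
    rw [Equiv.symm_apply_eq]
    ext
    simp [finSumFinEquiv]
    omega
  simp only [shufflePerm, Equiv.trans_apply, hs, Equiv.sumCongr_apply, Sum.map_inr,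
    Equiv.sumCompl_apply_inr, Equiv.subtypeEquivRight_apply_coe]
  rfl

lemma shufflePerm_mem {n : ℕ} (A : Finset (Fin n)) (k : Fin n) (h : (k : ℕ) < A.card) :
    shufflePerm A k ∈ A := by
  rw [shufflePerm_apply_lt A k h]; exact Finset.orderEmbOfFin_mem _ _ _

lemma shufflePerm_not_mem {n : ℕ} (A : Finset (Fin n)) (k : Fin n) (h : A.card ≤ (k : ℕ)) :
    shufflePerm A k ∉ A := by
  rw [shufflePerm_apply_ge A k h]
  have := Finset.orderEmbOfFin_mem Aᶜ (rfl : Aᶜ.card = Aᶜ.card) ⟨(k : ℕ) - A.card, by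
      have : Aᶜ.card = n - A.card := by simp [Finset.card_compl]
      omega⟩
  exact fun hA => (Finset.mem_compl.mp this) hA

lemma shufflePerm_lt_lt {n : ℕ} (A : Finset (Fin n)) (k l : Fin n) (hkl : k < l)
    (h : (l : ℕ) < A.card) : shufflePerm A k < shufflePerm A l := by
  rw [shufflePerm_apply_lt A k (lt_of_le_of_lt (le_of_lt hkl) h), shufflePerm_apply_lt A l h]
  exact (A.orderEmbOfFin rfl).strictMono (by simpa using hkl)

lemma shufflePerm_ge_lt {n : ℕ} (A : Finset (Fin n)) (k l : Fin n) (hkl : k < l)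
    (h : A.card ≤ (k : ℕ)) : shufflePerm A k < shufflePerm A l := by
  rw [shufflePerm_apply_ge A k h, shufflePerm_apply_ge A l (le_trans h (le_of_lt hkl))]
  exact (Aᶜ.orderEmbOfFin rfl).strictMono (by simp [Fin.lt_def]; omega)

lemma card_le_of_fin {n : ℕ} (A : Finset (Fin n)) : A.card ≤ n := by
  simpa using Finset.card_le_univ A

lemma shufflePerm_unique {n : ℕ} (A : Finset (Fin n)) (τ : Equiv.Perm (Fin n))
    (h1 : ∀ k : Fin n, (k : ℕ) < A.card → τ k ∈ A)
    (h2 : ∀ k l : Fin n, k < l → (l : ℕ) < A.card → τ k < τ l)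
    (h3 : ∀ k l : Fin n, k < l → A.card ≤ (k : ℕ) → τ k < τ l) :
    τ = shufflePerm A := by
  have hcard : A.card ≤ n := card_le_of_fin A
  have hcc : Aᶜ.card = n - A.card := by simp [Finset.card_compl]
  -- first block
  have hf : (fun j : Fin A.card => τ (Fin.castLE hcard j)) = A.orderEmbOfFin rfl := by
    apply Finset.orderEmbOfFin_unique
    · intro x; exact h1 _ (by simpa using x.isLt)
    · intro a b hab
      exact h2 _ _ (by simp only [Fin.lt_def, Fin.coe_castLE]; exact hab) (by simpa using b.isLt)
  -- second block lands in complement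
  have hsurj : ∀ a ∈ A, ∃ j : Fin A.card, τ (Fin.castLE hcard j) = a := by
    intro a ha
    have hinj : Function.Injective (fun j : Fin A.card => (⟨τ (Fin.castLE hcard j), h1 _ (by simpa using j.isLt)⟩ : {x // x ∈ A})) := by
      intro x y hxy
      simp only [Subtype.mk.injEq] at hxy
      have h5 := congrArg Fin.val (τ.injective hxy)
      exact Fin.ext h5
    have hbij := ((Fintype.bijective_iff_injective_and_card _).mpr ⟨hinj, by simp⟩).2
    obtain ⟨j, hj⟩ := hbij ⟨a, ha⟩
    exact ⟨j, by simpa [Subtype.ext_iff] using hj⟩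
  have hnm : ∀ k : Fin n, A.card ≤ (k : ℕ) → τ k ∉ A := by
    intro k hk hka
    obtain ⟨j, hj⟩ := hsurj (τ k) hka
    have := τ.injective hj
    have : (j : ℕ) = (k : ℕ) := congrArg Fin.val this
    omega
  have hg : (fun j : Fin Aᶜ.card => τ ⟨A.card + j, by omega⟩) = Aᶜ.orderEmbOfFin rfl := by
    apply Finset.orderEmbOfFin_unique
    · intro x; exact Finset.mem_compl.mpr (hnm _ (by simp))
    · intro a b hab
      have hab' : (a : ℕ) < (b : ℕ) := hab
      exact h3 _ _ (by simp only [Fin.lt_def]; simpa using hab') (by simp)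
  ext k
  rcases lt_or_ge (k : ℕ) A.card with h | h
  · rw [shufflePerm_apply_lt A k h]
    have := congrFun hf ⟨k, h⟩
    have hk : Fin.castLE hcard ⟨(k : ℕ), h⟩ = k := Fin.ext rfl
    rw [hk] at this
    exact congrArg Fin.val this
  · rw [shufflePerm_apply_ge A k h]
    have := congrFun hg ⟨(k : ℕ) - A.card, by omega⟩
    simp only at this
    have hk : (⟨A.card + ((k : ℕ) - A.card), by omega⟩ : Fin n) = k := Fin.ext (by simp; omega)
    rw [hk] at this
    exact congrArg Fin.val this

/-- The inflation `D_i(σ) ∈ 𝔖_{n+1}` of a permutation `σ ∈ 𝔖_n`: in the one-line word of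
`σ`, every letter `ℓ > i` is replaced by `ℓ+1` and the letter `i` is replaced by the two
consecutive letters `i, i+1`.  (0-indexed: `i : Fin n`, and the two consecutive letters are
`i.castSucc, i.succ` in `Fin (n+1)`.)  This is the operadic composition `σ ∘_i m_2` in the
associative operad. -/
def inflate {n : ℕ} (σ : Equiv.Perm (Fin n)) (i : Fin n) : Equiv.Perm (Fin (n + 1)) :=
  (finSuccEquiv' ((σ⁻¹ i).succ)).trans ((Equiv.optionCongr σ).trans (finSuccEquiv' i.succ).symm)

/-- The subset `B′_i(B) ⊆ {1,…,n+1}`: elements of `B` below `i` are kept, elements of `B`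
above `i` are shifted up by one, and if `i ∈ B` then both `i` and `i+1` are included.
(0-indexed via `Fin.castSucc` and `Fin.succ`.) -/
def inflateSet {n : ℕ} (B : Finset (Fin n)) (i : Fin n) : Finset (Fin (n + 1)) :=
  ((B.filter (· < i)).image Fin.castSucc) ∪ ((B.filter (i < ·)).image Fin.succ) ∪
    (if i ∈ B then {i.castSucc, i.succ} else ∅)

lemma succAbove_val {n : ℕ} (p : Fin (n + 1)) (j : Fin n) :
    ((p.succAbove j : Fin (n + 1)) : ℕ) = if (j : ℕ) < (p : ℕ) then (j : ℕ) else (j : ℕ) + 1 := by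
  rw [Fin.succAbove]
  split_ifs with h h2 h3
  · rfl
  · exact absurd h h2
  · exact absurd h3 h
  · rfl

lemma succAbove_val2 {n : ℕ} (p : Fin (n + 1)) (j : Fin n) :
    ((j : ℕ) < (p : ℕ) ∧ ((p.succAbove j : Fin (n + 1)) : ℕ) = (j : ℕ)) ∨
      ((p : ℕ) ≤ (j : ℕ) ∧ ((p.succAbove j : Fin (n + 1)) : ℕ) = (j : ℕ) + 1) := by
  have h := succAbove_val p j
  split_ifs at h with hc
  · exact Or.inl ⟨hc, h⟩
  · exact Or.inr ⟨by omega, h⟩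

lemma inflate_apply_pivot {n : ℕ} (σ : Equiv.Perm (Fin n)) (i : Fin n) :
    inflate σ i ((σ⁻¹ i).succ) = i.succ := by
  simp [inflate, finSuccEquiv'_at, finSuccEquiv'_symm_none]

lemma inflate_apply_succAbove {n : ℕ} (σ : Equiv.Perm (Fin n)) (i : Fin n) (j : Fin n) :
    inflate σ i (((σ⁻¹ i).succ).succAbove j) = Fin.succAbove i.succ (σ j) := by
  simp [inflate, finSuccEquiv'_succAbove, finSuccEquiv'_symm_some]

lemma mem_inflateSet {n : ℕ} {B : Finset (Fin n)} {i : Fin n} {a : Fin (n + 1)} :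
    a ∈ inflateSet B i ↔
      (∃ b ∈ B, b < i ∧ b.castSucc = a) ∨ (∃ b ∈ B, i < b ∧ b.succ = a) ∨
        (i ∈ B ∧ (a = i.castSucc ∨ a = i.succ)) := by
  simp only [inflateSet, Finset.mem_union, Finset.mem_image, Finset.mem_filter]
  constructor
  · rintro ((⟨b, ⟨hb, hbi⟩, hba⟩ | ⟨b, ⟨hb, hbi⟩, hba⟩) | h)
    · exact Or.inl ⟨b, hb, hbi, hba⟩
    · exact Or.inr (Or.inl ⟨b, hb, hbi, hba⟩)
    · by_cases hi : i ∈ B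
      · simp only [if_pos hi, Finset.mem_insert, Finset.mem_singleton] at h
        exact Or.inr (Or.inr ⟨hi, h⟩)
      · simp [if_neg hi] at h
  · rintro (⟨b, hb, hbi, hba⟩ | ⟨b, hb, hbi, hba⟩ | ⟨hi, h⟩)
    · exact Or.inl (Or.inl ⟨b, ⟨hb, hbi⟩, hba⟩)
    · exact Or.inl (Or.inr ⟨b, ⟨hb, hbi⟩, hba⟩)
    · exact Or.inr (by simp [if_pos hi, h])

lemma succAbove_succ_mem_inflateSet {n : ℕ} {B : Finset (Fin n)} {i : Fin n} {b : Fin n}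
    (hb : b ∈ B) : Fin.succAbove i.succ b ∈ inflateSet B i := by
  rw [mem_inflateSet]
  rcases lt_trichotomy b i with h | h | h
  · refine Or.inl ⟨b, hb, h, ?_⟩
    rw [Fin.succAbove]
    rw [if_pos]
    simp [Fin.lt_def]
    exact le_of_lt h
  · subst h
    refine Or.inr (Or.inr ⟨hb, Or.inl ?_⟩)
    rw [Fin.succAbove, if_pos]
    simp [Fin.lt_def]
  · refine Or.inr (Or.inl ⟨b, hb, h, ?_⟩)
    rw [Fin.succAbove, if_neg]
    simp only [Fin.lt_def, Fin.coe_castSucc, Fin.val_succ] at h ⊢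
    omega

lemma card_inflateSet {n : ℕ} (B : Finset (Fin n)) (i : Fin n) :
    (inflateSet B i).card = if i ∈ B then B.card + 1 else B.card := by
  classical
  set L := (B.filter (· < i)).image (Fin.castSucc (n := n)) with hL
  set R := (B.filter (i < ·)).image (Fin.succ (n := n)) with hR
  set P : Finset (Fin (n+1)) := if i ∈ B then {i.castSucc, i.succ} else ∅ with hP
  have hLR : Disjoint L R := by
    rw [Finset.disjoint_left]
    rintro a ha hb
    simp only [hL, hR, Finset.mem_image, Finset.mem_filter] at ha hb
    obtain ⟨b, ⟨_, hbi⟩, hba⟩ := ha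
    obtain ⟨c, ⟨_, hic⟩, hca⟩ := hb
    have h1 : (b : ℕ) = (a : ℕ) := congrArg Fin.val hba
    have h2 : (c : ℕ) + 1 = (a : ℕ) := congrArg Fin.val hca
    have h3 : (b : ℕ) < (i : ℕ) := hbi
    have h4 : (i : ℕ) < (c : ℕ) := hic
    omega
  have hLP : Disjoint (L ∪ R) P := by
    rw [Finset.disjoint_left]
    rintro a ha hb
    simp only [hP] at hb
    split_ifs at hb with hi
    · simp only [Finset.mem_insert, Finset.mem_singleton] at hb
      simp only [hL, hR, Finset.mem_union, Finset.mem_image, Finset.mem_filter] at ha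
      have hav : (a : ℕ) = (i : ℕ) ∨ (a : ℕ) = (i : ℕ) + 1 := by
        rcases hb with hb | hb
        · exact Or.inl (congrArg Fin.val hb)
        · exact Or.inr (congrArg Fin.val hb)
      rcases ha with ⟨b, ⟨_, hbi⟩, hba⟩ | ⟨c, ⟨_, hic⟩, hca⟩
      · have h1 : (b : ℕ) = (a : ℕ) := congrArg Fin.val hba
        have h3 : (b : ℕ) < (i : ℕ) := hbi
        omega
      · have h2 : (c : ℕ) + 1 = (a : ℕ) := congrArg Fin.val hca
        have h4 : (i : ℕ) < (c : ℕ) := hic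
        omega
    · simp at hb
  have hcL : L.card = (B.filter (· < i)).card :=
    Finset.card_image_of_injective _ (Fin.castSucc_injective n)
  have hcR : R.card = (B.filter (i < ·)).card :=
    Finset.card_image_of_injective _ (Fin.succ_injective n)
  have hcP : P.card = if i ∈ B then 2 else 0 := by
    rw [hP]; split_ifs
    · rw [Finset.card_insert_of_notMem, Finset.card_singleton]
      simp only [Finset.mem_singleton]
      intro h
      have := congrArg Fin.val h
      simp at this
    · simp
  have hB : B.card = (B.filter (· < i)).card + (B.filter (i < ·)).card
      + (if i ∈ B then 1 else 0) := by
    have hsplit : B.filter (fun b => ¬ b < i)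
        = (B.filter (i < ·)) ∪ (if i ∈ B then {i} else ∅) := by
      ext b
      simp only [Finset.mem_filter, Finset.mem_union, not_lt]
      constructor
      · rintro ⟨hb, hib⟩
        rcases lt_or_eq_of_le hib with h | h
        · exact Or.inl ⟨hb, h⟩
        · subst h; simp [hb]
      · rintro (⟨hb, hib⟩ | h)
        · exact ⟨hb, le_of_lt hib⟩
        · split_ifs at h with hi
          · simp only [Finset.mem_singleton] at h; subst h; exact ⟨hi, le_refl _⟩
          · simp at h
    have hd2 : Disjoint (B.filter (i < ·)) (if i ∈ B then ({i} : Finset (Fin n)) else ∅) := by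
      rw [Finset.disjoint_left]
      intro a ha hb
      simp only [Finset.mem_filter] at ha
      split_ifs at hb with hi
      · simp only [Finset.mem_singleton] at hb; subst hb; exact lt_irrefl _ ha.2
      · simp at hb
    have := Finset.card_filter_add_card_filter_not (s := B) (p := (· < i))
    rw [hsplit, Finset.card_union_of_disjoint hd2] at this
    have hone : (if i ∈ B then ({i} : Finset (Fin n)) else ∅).card = if i ∈ B then 1 else 0 := by
      split_ifs <;> simp
    omega
  rw [show inflateSet B i = (L ∪ R) ∪ P from rfl,
    Finset.card_union_of_disjoint hLP, Finset.card_union_of_disjoint hLR, hcL, hcR, hcP]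
  split_ifs at hB ⊢ <;> omega

lemma inflate_shufflePerm {n : ℕ} (B : Finset (Fin n)) (i : Fin n) :
    inflate (shufflePerm B) i = shufflePerm (inflateSet B i) := by
  set σ := shufflePerm B with hσdef
  obtain ⟨m, hm⟩ : ∃ m, σ⁻¹ i = m := ⟨_, rfl⟩
  set A := inflateSet B i with hAdef
  set c := B.card with hcdef
  have hσm : σ m = i := by rw [← hm]; exact Equiv.apply_symm_apply σ i
  have him : i ∈ B ↔ (m : ℕ) < c := by
    constructor
    · intro h
      by_contra hmc
      exact shufflePerm_not_mem B m (le_of_not_gt hmc) (hσm ▸ h)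
    · intro h
      exact hσm ▸ shufflePerm_mem B m h
  have hAc : A.card = if i ∈ B then c + 1 else c := card_inflateSet B i
  have hpiv : inflate σ i m.succ = i.succ := by
    rw [← hm]; exact inflate_apply_pivot σ i
  have hsab : ∀ j : Fin n, inflate σ i (m.succ.succAbove j) = Fin.succAbove i.succ (σ j) := by
    intro j; rw [← hm]; exact inflate_apply_succAbove σ i j
  have hglt : ∀ x y : Fin n, x < y → Fin.succAbove i.succ x < Fin.succAbove i.succ y := by
    intro x y h
    have h1 := succAbove_val2 i.succ x
    have h2 := succAbove_val2 i.succ y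
    have h3 : (x : ℕ) < (y : ℕ) := h
    rw [Fin.lt_def]
    simp only [Fin.val_succ] at h1 h2
    omega
  have hgle : ∀ x : Fin n, x ≤ i → Fin.succAbove i.succ x < i.succ := by
    intro x h
    have h1 := succAbove_val2 i.succ x
    have h3 : (x : ℕ) ≤ (i : ℕ) := h
    rw [Fin.lt_def]
    simp only [Fin.val_succ] at h1 ⊢
    omega
  have hgge : ∀ x : Fin n, i < x → i.succ < Fin.succAbove i.succ x := by
    intro x h
    have h1 := succAbove_val2 i.succ x
    have h3 : (i : ℕ) < (x : ℕ) := h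
    rw [Fin.lt_def]
    simp only [Fin.val_succ] at h1 ⊢
    omega
  have hpos : ∀ k : Fin (n + 1), k = m.succ ∨ ∃ j : Fin n, m.succ.succAbove j = k := by
    intro k
    by_cases h : k = m.succ
    · exact Or.inl h
    · exact Or.inr (Fin.exists_succAbove_eq h)
  have hkey : ∀ k l : Fin (n + 1), k < l → ((l : ℕ) < A.card ∨ A.card ≤ (k : ℕ)) →
      inflate σ i k < inflate σ i l := by
    intro k l hkl hblock
    have hkl' : (k : ℕ) < (l : ℕ) := hkl
    rcases hpos k with rfl | ⟨a, rfl⟩ <;> rcases hpos l with rfl | ⟨b, rfl⟩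
    · exact absurd hkl (lt_irrefl _)
    · -- pivot < succAbove b
      rw [hpiv, hsab]
      have hvb := succAbove_val2 m.succ b
      simp only [Fin.val_succ] at hvb hkl'
      have hb : (m : ℕ) < (b : ℕ) := by omega
      have hmb : m < b := hb
      apply hgge
      rw [← hσm]
      by_cases hiB : i ∈ B
      · have hm5 : (m : ℕ) < c := him.mp hiB
        rw [hAc, if_pos hiB] at hblock
        simp only [Fin.val_succ] at hblock
        have hbc : (b : ℕ) < c := by
          rcases hblock with hbl | hbl <;> omega
        exact shufflePerm_lt_lt B m b hmb hbc
      · have hm5 : ¬ (m : ℕ) < c := fun hh => hiB (him.mpr hh)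
        exact shufflePerm_ge_lt B m b hmb (by omega)
    · -- succAbove a < pivot
      rw [hpiv, hsab]
      have hva := succAbove_val2 m.succ a
      simp only [Fin.val_succ] at hva hkl'
      have ha : (a : ℕ) ≤ (m : ℕ) := by omega
      apply hgle
      by_cases ham : a = m
      · subst ham; rw [hσm]
      · have ha' : (a : ℕ) < (m : ℕ) :=
          lt_of_le_of_ne ha (fun h => ham (Fin.ext h))
        have ham' : a < m := ha'
        by_cases hiB : i ∈ B
        · have hm5 : (m : ℕ) < c := him.mp hiB
          rw [← hσm]
          exact le_of_lt (shufflePerm_lt_lt B a m ham' hm5)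
        · have hm5 : ¬ (m : ℕ) < c := fun hh => hiB (him.mpr hh)
          rw [hAc, if_neg hiB] at hblock
          simp only [Fin.val_succ] at hblock
          have hac : c ≤ (a : ℕ) := by
            rcases hblock with hbl | hbl <;> omega
          rw [← hσm]
          exact le_of_lt (shufflePerm_ge_lt B a m ham' hac)
    · -- succAbove a < succAbove b
      rw [hsab, hsab]
      have hva := succAbove_val2 m.succ a
      have hvb := succAbove_val2 m.succ b
      simp only [Fin.val_succ] at hva hvb hkl'
      have hab : (a : ℕ) < (b : ℕ) := by omega
      have hab' : a < b := hab
      apply hglt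
      by_cases hiB : i ∈ B
      · have hm5 : (m : ℕ) < c := him.mp hiB
        rw [hAc, if_pos hiB] at hblock
        rcases hblock with hbl | hbl
        · exact shufflePerm_lt_lt B a b hab' (by omega)
        · exact shufflePerm_ge_lt B a b hab' (by omega)
      · have hm5 : ¬ (m : ℕ) < c := fun hh => hiB (him.mpr hh)
        rw [hAc, if_neg hiB] at hblock
        rcases hblock with hbl | hbl
        · exact shufflePerm_lt_lt B a b hab' (by omega)
        · exact shufflePerm_ge_lt B a b hab' (by omega)
  apply shufflePerm_unique
  · -- membership
    intro k hk
    rcases hpos k with rfl | ⟨j, rfl⟩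
    · rw [hpiv]
      have hiB : i ∈ B := by
        by_contra hiB
        rw [hAc, if_neg hiB] at hk
        have hm5 : ¬ (m : ℕ) < c := fun hh => hiB (him.mpr hh)
        simp only [Fin.val_succ] at hk
        omega
      exact mem_inflateSet.mpr (Or.inr (Or.inr ⟨hiB, Or.inr rfl⟩))
    · rw [hsab]
      apply succAbove_succ_mem_inflateSet
      apply shufflePerm_mem
      have hv := succAbove_val2 m.succ j
      rw [hAc] at hk
      simp only [Fin.val_succ] at hv
      by_cases hiB : i ∈ B
      · have hm5 : (m : ℕ) < c := him.mp hiB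
        rw [if_pos hiB] at hk
        omega
      · have hm5 : ¬ (m : ℕ) < c := fun hh => hiB (him.mpr hh)
        rw [if_neg hiB] at hk
        omega
  · exact fun k l h hl => hkey k l h (Or.inl hl)
  · exact fun k l h hl => hkey k l h (Or.inr hl)

def deflateSet {n : ℕ} (A : Finset (Fin (n + 1))) (i : Fin n) : Finset (Fin n) :=
  Finset.univ.filter (fun b => if b < i then b.castSucc ∈ A else b.succ ∈ A)

lemma castSucc_mem_inflateSet {n : ℕ} (B : Finset (Fin n)) (i : Fin n) :
    i.castSucc ∈ inflateSet B i ↔ i ∈ B := by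
  rw [mem_inflateSet]
  constructor
  · rintro (⟨b, hb, hbi, hba⟩ | ⟨b, hb, hbi, hba⟩ | ⟨hi, _⟩)
    · have h1 := congrArg Fin.val hba
      have h2 : (b : ℕ) < (i : ℕ) := hbi
      simp only [Fin.coe_castSucc] at h1
      omega
    · have h1 := congrArg Fin.val hba
      have h2 : (i : ℕ) < (b : ℕ) := hbi
      simp only [Fin.val_succ, Fin.coe_castSucc] at h1
      omega
    · exact hi
  · intro h
    exact Or.inr (Or.inr ⟨h, Or.inl rfl⟩)

lemma succ_mem_inflateSet {n : ℕ} (B : Finset (Fin n)) (i : Fin n) :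
    i.succ ∈ inflateSet B i ↔ i ∈ B := by
  rw [mem_inflateSet]
  constructor
  · rintro (⟨b, hb, hbi, hba⟩ | ⟨b, hb, hbi, hba⟩ | ⟨hi, _⟩)
    · have h1 := congrArg Fin.val hba
      have h2 : (b : ℕ) < (i : ℕ) := hbi
      simp only [Fin.val_succ, Fin.coe_castSucc] at h1
      omega
    · have h1 := congrArg Fin.val hba
      have h2 : (i : ℕ) < (b : ℕ) := hbi
      simp only [Fin.val_succ] at h1
      have h3 : (b : ℕ) = (i : ℕ) := by omega
      exact absurd h3 (by omega)
    · exact hi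
  · intro h
    exact Or.inr (Or.inr ⟨h, Or.inr rfl⟩)

lemma deflateSet_inflateSet {n : ℕ} (B : Finset (Fin n)) (i : Fin n) :
    deflateSet (inflateSet B i) i = B := by
  ext b
  simp only [deflateSet, Finset.mem_filter, Finset.mem_univ, true_and]
  split_ifs with h
  · constructor
    · intro hb
      rw [mem_inflateSet] at hb
      rcases hb with ⟨c, hc, hci, hca⟩ | ⟨c, hc, hci, hca⟩ | ⟨hi, hca⟩
      · have h1 := congrArg Fin.val hca
        simp only [Fin.coe_castSucc] at h1
        rwa [show c = b from Fin.ext h1] at hc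
      · have h1 := congrArg Fin.val hca
        have h2 : (i : ℕ) < (c : ℕ) := hci
        have h3 : (b : ℕ) < (i : ℕ) := h
        simp only [Fin.val_succ, Fin.coe_castSucc] at h1
        omega
      · have h3 : (b : ℕ) < (i : ℕ) := h
        rcases hca with hca | hca <;>
          · have h1 := congrArg Fin.val hca
            simp only [Fin.val_succ, Fin.coe_castSucc] at h1
            omega
    · intro hb
      exact mem_inflateSet.mpr (Or.inl ⟨b, hb, h, rfl⟩)
  · rcases eq_or_lt_of_le (le_of_not_gt h) with heq | hlt
    · rw [show b = i from Fin.ext (congrArg Fin.val heq).symm]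
      exact succ_mem_inflateSet B i
    · constructor
      · intro hb
        rw [mem_inflateSet] at hb
        rcases hb with ⟨c, hc, hci, hca⟩ | ⟨c, hc, hci, hca⟩ | ⟨hi, hca⟩
        · have h1 := congrArg Fin.val hca
          have h2 : (c : ℕ) < (i : ℕ) := hci
          have h3 : (i : ℕ) < (b : ℕ) := hlt
          simp only [Fin.val_succ, Fin.coe_castSucc] at h1
          omega
        · have h1 := congrArg Fin.val hca
          simp only [Fin.val_succ] at h1
          rwa [show c = b from Fin.ext (by omega)] at hc
        · have h3 : (i : ℕ) < (b : ℕ) := hlt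
          rcases hca with hca | hca <;>
            · have h1 := congrArg Fin.val hca
              simp only [Fin.val_succ, Fin.coe_castSucc] at h1
              omega
      · intro hb
        exact mem_inflateSet.mpr (Or.inr (Or.inl ⟨b, hb, hlt, rfl⟩))

lemma inflateSet_deflateSet {n : ℕ} (A : Finset (Fin (n + 1))) (i : Fin n)
    (hiff : i.castSucc ∈ A ↔ i.succ ∈ A) :
    inflateSet (deflateSet A i) i = A := by
  have hmemB : ∀ b : Fin n, b ∈ deflateSet A i ↔
      (if b < i then b.castSucc ∈ A else b.succ ∈ A) := by
    intro b
    simp [deflateSet]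
  ext a
  rcases Nat.lt_trichotomy (a : ℕ) (i : ℕ) with ha | ha | ha
  · -- a < i
    have hb : ((⟨(a : ℕ), by omega⟩ : Fin n)).castSucc = a := Fin.ext rfl
    constructor
    · intro hmem
      rw [mem_inflateSet] at hmem
      rcases hmem with ⟨c, hc, hci, hca⟩ | ⟨c, hc, hci, hca⟩ | ⟨hi, hca⟩
      · rw [hmemB c, if_pos hci] at hc
        rwa [hca] at hc
      · have h1 := congrArg Fin.val hca
        have h2 : (i : ℕ) < (c : ℕ) := hci
        simp only [Fin.val_succ] at h1
        omega
      · rcases hca with hca | hca <;>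
          · have h1 := congrArg Fin.val hca
            simp only [Fin.val_succ, Fin.coe_castSucc] at h1
            omega
    · intro hmem
      apply mem_inflateSet.mpr
      refine Or.inl ⟨⟨(a : ℕ), by omega⟩, ?_, by simpa [Fin.lt_def] using ha, hb⟩
      rw [hmemB, if_pos (by simpa [Fin.lt_def] using ha), hb]
      exact hmem
  · -- a = i (as castSucc)
    have hai : a = i.castSucc := Fin.ext (by simpa using ha)
    subst hai
    rw [castSucc_mem_inflateSet, hmemB, if_neg (lt_irrefl i), hiff]
  · rcases Nat.eq_or_lt_of_le ha with ha' | ha'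
    · -- a = i + 1
      have hai : a = i.succ := Fin.ext (by simp [← ha'])
      subst hai
      rw [succ_mem_inflateSet, hmemB, if_neg (lt_irrefl i)]
    · -- a > i + 1
      have han : (a : ℕ) - 1 < n := by
        have := a.isLt
        have := i.isLt
        omega
      have hb : ((⟨(a : ℕ) - 1, han⟩ : Fin n)).succ = a := Fin.ext (by simp; omega)
      have hbi : i < (⟨(a : ℕ) - 1, han⟩ : Fin n) := by
        rw [Fin.lt_def]; simp; omega
      constructor
      · intro hmem
        rw [mem_inflateSet] at hmem
        rcases hmem with ⟨c, hc, hci, hca⟩ | ⟨c, hc, hci, hca⟩ | ⟨hi, hca⟩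
        · have h1 := congrArg Fin.val hca
          have h2 : (c : ℕ) < (i : ℕ) := hci
          simp only [Fin.coe_castSucc] at h1
          omega
        · rw [hmemB c, if_neg (not_lt_of_gt hci)] at hc
          rwa [hca] at hc
        · rcases hca with hca | hca <;>
            · have h1 := congrArg Fin.val hca
              simp only [Fin.val_succ, Fin.coe_castSucc] at h1
              omega
      · intro hmem
        apply mem_inflateSet.mpr
        refine Or.inr (Or.inl ⟨⟨(a : ℕ) - 1, han⟩, ?_, hbi, hb⟩)
        rw [hmemB, if_neg (not_lt_of_gt hbi), hb]
        exact hmem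

/-- The shuffle element `sh_n = ∑_{A ⊆ {1,…,n}} σ_A` of the integral group algebra
`ℤ[𝔖_n]`. -/
noncomputable def sh (n : ℕ) : MonoidAlgebra ℤ (Equiv.Perm (Fin n)) :=
  ∑ A : Finset (Fin n), MonoidAlgebra.of ℤ (Equiv.Perm (Fin n)) (shufflePerm A)

/-- In `ℤ[𝔖_{n+1}]`:
`sh_{n+1} − ∑_{B ⊆ {1,…,n}} D_i(σ_B) = ∑_A σ_A`, the sum on the right ranging over those
subsets `A ⊆ {1,…,n+1}` containing exactly one of the two elements `i` and `i+1`. -/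
theorem sh_sub_sum_inflate {n : ℕ} (i : Fin n) :
    sh (n + 1) -
        (∑ B : Finset (Fin n),
          MonoidAlgebra.of ℤ (Equiv.Perm (Fin (n + 1))) (inflate (shufflePerm B) i)) =
      ∑ A ∈ Finset.univ.filter (fun A : Finset (Fin (n + 1)) =>
          (i.castSucc ∈ A ∧ i.succ ∉ A) ∨ (i.succ ∈ A ∧ i.castSucc ∉ A)),
        MonoidAlgebra.of ℤ (Equiv.Perm (Fin (n + 1))) (shufflePerm A) := by
  classical
  set P : Finset (Fin (n + 1)) → Prop := fun A =>
    (i.castSucc ∈ A ∧ i.succ ∉ A) ∨ (i.succ ∈ A ∧ i.castSucc ∉ A) with hP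
  have hsplit := Finset.sum_filter_add_sum_filter_not Finset.univ P
    (fun A => MonoidAlgebra.of ℤ (Equiv.Perm (Fin (n + 1))) (shufflePerm A))
  have h2 : (∑ B : Finset (Fin n),
        MonoidAlgebra.of ℤ (Equiv.Perm (Fin (n + 1))) (inflate (shufflePerm B) i)) =
      ∑ A ∈ Finset.univ.filter (fun A => ¬ P A),
        MonoidAlgebra.of ℤ (Equiv.Perm (Fin (n + 1))) (shufflePerm A) := by
    simp_rw [inflate_shufflePerm]
    refine Finset.sum_nbij' (fun B => inflateSet B i) (fun A => deflateSet A i) ?_ ?_ ?_ ?_ ?_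
    · intro B _
      simp only [Finset.mem_filter, Finset.mem_univ, true_and, hP,
        castSucc_mem_inflateSet, succ_mem_inflateSet]
      tauto
    · intro A _
      exact Finset.mem_univ _
    · intro B _
      exact deflateSet_inflateSet B i
    · intro A hA
      simp only [Finset.mem_filter, hP] at hA
      exact inflateSet_deflateSet A i (by tauto)
    · intro B _
      rfl
  rw [h2, sh, ← hsplit]
  abel
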